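/- If P and Q are coprime integers, then the greatest common divisor of P·(P²−3Q)·(P²−Q) and (P²−2Q)·(P⁴−4P²Q+Q²) divides 2. -/

import Mathlib

theorem stmt_2 (P Q : ℤ) (h : IsCoprime P Q) :
    Int.gcd (P * (P ^ 2 - 3 * Q) * (P ^ 2 - Q))
        ((P ^ 2 - 2 * Q) * (P ^ 4 - 4 * P ^ 2 * Q + Q ^ 2)) ∣ 2 := by
  set A := P * (P ^ 2 - 3 * Q) * (P ^ 2 - Q) with hA
  set B := (P ^ 2 - 2 * Q) * (P ^ 4 - 4 * P ^ 2 * Q + Q ^ 2) with hB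
  have hdA : (Int.gcd A B : ℤ) ∣ A := Int.gcd_dvd_left A B
  have hdB : (Int.gcd A B : ℤ) ∣ B := Int.gcd_dvd_right A B
  have h1 : (Int.gcd A B : ℤ) ∣ 2 * Q ^ 5 := by
    have : (P ^ 5 - 5 * P ^ 3 * Q + 5 * P * Q ^ 2) * A +
        (-P ^ 4 + 3 * P ^ 2 * Q - Q ^ 2) * B = 2 * Q ^ 5 := by rw [hA, hB]; ring
    rw [← this]
    exact dvd_add (Dvd.dvd.mul_left hdA _) (Dvd.dvd.mul_left hdB _)
  have h2 : (Int.gcd A B : ℤ) ∣ 2 * P ^ 9 := by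
    have : (43 * P ^ 4 - 116 * P ^ 2 * Q + 28 * Q ^ 2) * A +
        (-41 * P ^ 3 + 42 * P * Q) * B = 2 * P ^ 9 := by rw [hA, hB]; ring
    rw [← this]
    exact dvd_add (Dvd.dvd.mul_left hdA _) (Dvd.dvd.mul_left hdB _)
  have hc : IsCoprime (P ^ 9) (Q ^ 5) := h.pow
  obtain ⟨a, b, hab⟩ := hc
  have : (Int.gcd A B : ℤ) ∣ 2 := by
    have h2' : a * (2 * P ^ 9) + b * (2 * Q ^ 5) = 2 := by
      have := hab; nlinarith [hab]
    rw [← h2']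
    exact dvd_add (Dvd.dvd.mul_left h2 _) (Dvd.dvd.mul_left h1 _)
  exact_mod_cast this
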